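/- (Anticommutativity bound) Let {λ_i}_{i∈I}, I = {1,...,d²}, be an orthonormal self-adjoint basis of the d×d Hermitian matrices, and A ⊆ I a subset such that (1/2)√(Σ_{i≠j∈A} ⟨{λ_i,λ_j}⟩_ρ²) ≤ K for a density matrix ρ = Σ_{i∈A} c_i λ_i + Σ_{l∉A} c_l λ_l. Then Σ_{i∈A} c_i² ≤ (max_{i∈A} ⟨λ_i²⟩_ρ + K) / (min_{i∈A} Tr(λ_i²))². -/

import Mathlib

open Matrix Complex BigOperators
open scoped ComplexOrder


lemma psd_trace_re_nonneg {n : Type*} [Fintype n] [DecidableEq n]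
    {M : Matrix n n ℂ} (h : M.PosSemidef) : 0 ≤ M.trace.re := by
  have hd : ∀ i, 0 ≤ (M i i).re := by
    intro i
    have := h.re_dotProduct_nonneg (Pi.single i 1)
    simpa [dotProduct, Matrix.mulVec, Pi.single_apply, Finset.mul_sum] using this
  rw [Matrix.trace, Complex.re_sum]
  exact Finset.sum_nonneg fun i _ => hd i

lemma trace_self_mul_conjTranspose_pos {n : Type*} [Fintype n] [DecidableEq n]
    {A : Matrix n n ℂ} (hA : A ≠ 0) : 0 < (A * Aᴴ).trace.re := by
  have h1 : (A * Aᴴ).trace.re = ∑ i, ∑ j, Complex.normSq (A i j) := by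
    simp [Matrix.trace, Matrix.mul_apply, Matrix.conjTranspose_apply, Matrix.diag,
      Complex.mul_conj, Complex.re_sum]
  rw [h1]
  obtain ⟨i, j, hij⟩ : ∃ i j, A i j ≠ 0 := by
    by_contra h
    push_neg at h
    exact hA (by ext i j; exact h i j)
  refine Finset.sum_pos' (fun i _ => Finset.sum_nonneg fun j _ => Complex.normSq_nonneg _)
    ⟨i, Finset.mem_univ i, Finset.sum_pos' (fun j _ => Complex.normSq_nonneg _)
      ⟨j, Finset.mem_univ j, Complex.normSq_pos.2 hij⟩⟩

/-- Anticommutativity bound: for an orthogonal self-adjoint basis `{λ_i}` of the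
`d×d` Hermitian matrices and a subset `A` whose mutual anticommutators with respect
to a density matrix `ρ = Σ c_i λ_i` are bounded by `K`, the Bloch vector components
satisfy `Σ_{i∈A} c_i² ≤ (max_{i∈A}⟨λ_i²⟩ + K) / (min_{i∈A} Tr(λ_i²))²`. -/
theorem anticommutativity_bound (d : ℕ) [NeZero d]
    (lam : Fin (d ^ 2) → Matrix (Fin d) (Fin d) ℂ)
    (hherm : ∀ i, (lam i).IsHermitian)
    (horth : ∀ i j, i ≠ j → Matrix.trace (lam i * lam j) = 0)
    (hbasis : LinearIndependent ℂ lam)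
    (c : Fin (d ^ 2) → ℝ)
    (ρ : Matrix (Fin d) (Fin d) ℂ)
    (hρ : ρ = ∑ i, (c i : ℂ) • lam i)
    (hpsd : ρ.PosSemidef) (htr : Matrix.trace ρ = 1)
    (A : Finset (Fin (d ^ 2))) (hA : A.Nonempty) (K : ℝ)
    (hK : (1 / 2) * Real.sqrt (∑ i ∈ A, ∑ j ∈ A,
        if i ≠ j then
          (Matrix.trace (ρ * (lam i * lam j + lam j * lam i))).re ^ 2
        else 0) ≤ K) :
    ∑ i ∈ A, c i ^ 2 ≤
      ((A.sup' hA fun i => (Matrix.trace (ρ * lam i ^ 2)).re) + K) /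
        (A.inf' hA fun i => (Matrix.trace (lam i ^ 2)).re) ^ 2 := by
  classical
  set S := ∑ i ∈ A, c i ^ 2 with hS
  set t := A.inf' hA fun i => (Matrix.trace (lam i ^ 2)).re with ht
  set Mx := A.sup' hA fun i => (Matrix.trace (ρ * lam i ^ 2)).re with hMx
  set Q := ∑ i ∈ A, ∑ j ∈ A,
        if i ≠ j then (Matrix.trace (ρ * (lam i * lam j + lam j * lam i))).re ^ 2 else 0 with hQ
  -- positivity of each Tr(λ_i²)
  have htpos : ∀ i, 0 < (Matrix.trace (lam i ^ 2)).re := by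
    intro i
    have hne : lam i ≠ 0 := hbasis.ne_zero i
    have : lam i ^ 2 = lam i * (lam i)ᴴ := by rw [sq, (hherm i).eq]
    rw [this]
    exact trace_self_mul_conjTranspose_pos hne
  have ht0 : 0 < t := (Finset.lt_inf'_iff hA).2 fun i _ => htpos i
  -- trace of ρ * λ_i
  have htrl : ∀ i, Matrix.trace (ρ * lam i) = (c i : ℂ) * Matrix.trace (lam i ^ 2) := by
    intro i
    rw [hρ, Finset.sum_mul]
    simp only [smul_mul_assoc, Matrix.trace_sum, Matrix.trace_smul]
    rw [Finset.sum_eq_single i]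
    · rw [sq]; simp [smul_eq_mul]
    · intro j _ hji
      rw [horth j i hji, smul_zero]
    · intro h; exact absurd (Finset.mem_univ i) h
  -- nonnegativity of each ⟨λ_i²⟩
  have hxii : ∀ i, 0 ≤ (Matrix.trace (ρ * lam i ^ 2)).re := by
    intro i
    have h1 : ρ * lam i ^ 2 = ρ * lam i * lam i := by rw [sq, Matrix.mul_assoc]
    have h2 : Matrix.trace (ρ * lam i * lam i) = Matrix.trace (lam i * ρ * (lam i)ᴴ) := by
      rw [(hherm i).eq, Matrix.trace_mul_comm, Matrix.mul_assoc]
    rw [h1, h2]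
    exact psd_trace_re_nonneg (hpsd.mul_mul_conjTranspose_same (lam i))
  have hMx0 : 0 ≤ Mx := by
    obtain ⟨i, hi⟩ := hA
    exact le_trans (hxii i) (Finset.le_sup' (fun i => (Matrix.trace (ρ * lam i ^ 2)).re) hi)
  have hQ0 : 0 ≤ Q :=
    Finset.sum_nonneg fun i _ => Finset.sum_nonneg fun j _ => by positivity
  have hK0 : 0 ≤ K := le_trans (by positivity) hK
  have hS0 : 0 ≤ S := Finset.sum_nonneg fun i _ => sq_nonneg _
  -- the observable O
  set O := ∑ i ∈ A, (c i : ℂ) • lam i with hO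
  have hOherm : Oᴴ = O := by
    rw [hO, Matrix.conjTranspose_sum]
    exact Finset.sum_congr rfl fun i _ => by
      rw [Matrix.conjTranspose_smul, (hherm i).eq, Complex.star_def, Complex.conj_ofReal]
  -- first moment
  have htrO : Matrix.trace (ρ * O) = ∑ i ∈ A, (c i : ℂ) * ((c i : ℂ) * Matrix.trace (lam i ^ 2)) := by
    rw [hO, Finset.mul_sum]
    simp only [Matrix.mul_smul, Matrix.trace_sum, Matrix.trace_smul, smul_eq_mul]
    exact Finset.sum_congr rfl fun i _ => by rw [htrl i]
  set μ := (Matrix.trace (ρ * O)).re with hμ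
  have hμval : μ = ∑ i ∈ A, c i ^ 2 * (Matrix.trace (lam i ^ 2)).re := by
    rw [hμ, htrO, Complex.re_sum]
    refine Finset.sum_congr rfl fun i _ => ?_
    rw [← mul_assoc, ← Complex.ofReal_mul, Complex.re_ofReal_mul, ← sq]
  have hμge : t * S ≤ μ := by
    rw [hμval, hS, Finset.mul_sum]
    refine Finset.sum_le_sum fun i hi => ?_
    rw [mul_comm (t : ℝ)]
    exact mul_le_mul_of_nonneg_left (Finset.inf'_le _ hi) (sq_nonneg _)
  -- variance positivity : μ² ≤ ⟨O²⟩
  have hvar : μ ^ 2 ≤ (Matrix.trace (ρ * (O * O))).re := by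
    set P := O - (μ : ℂ) • (1 : Matrix (Fin d) (Fin d) ℂ) with hP
    have hPherm : Pᴴ = P := by
      rw [hP, Matrix.conjTranspose_sub, hOherm, Matrix.conjTranspose_smul,
        Matrix.conjTranspose_one, Complex.star_def, Complex.conj_ofReal]
    have hpos : 0 ≤ (Matrix.trace (ρ * (P * P))).re := by
      have h2 : Matrix.trace (ρ * (P * P)) = Matrix.trace (P * ρ * Pᴴ) := by
        rw [hPherm, ← Matrix.mul_assoc, Matrix.trace_mul_comm, Matrix.mul_assoc]
      rw [h2]
      exact psd_trace_re_nonneg (hpsd.mul_mul_conjTranspose_same P)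
    have hexp : Matrix.trace (ρ * (P * P)) =
        Matrix.trace (ρ * (O * O)) - 2 * (μ : ℂ) * Matrix.trace (ρ * O)
          + (μ : ℂ) ^ 2 * Matrix.trace ρ := by
      have hPP : P * P = O * O - (2 * (μ : ℂ)) • O + ((μ : ℂ) ^ 2) • 1 := by
        rw [hP]
        simp only [Matrix.sub_mul, Matrix.mul_sub, smul_mul_assoc, mul_smul_comm,
          Matrix.mul_one, Matrix.one_mul, smul_smul]
        module
      rw [hPP]
      simp only [Matrix.mul_add, Matrix.mul_sub, Matrix.trace_add, Matrix.trace_sub,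
        Matrix.mul_smul, Matrix.trace_smul, smul_eq_mul, Matrix.mul_one]
    have := hpos
    rw [hexp, htr, mul_one] at this
    simp only [Complex.sub_re, Complex.add_re] at this
    have h2re : (2 * (μ : ℂ) * Matrix.trace (ρ * O)).re = 2 * μ * μ := by
      have : (2 : ℂ) * (μ : ℂ) = ((2 * μ : ℝ) : ℂ) := by push_cast; ring
      rw [this, Complex.re_ofReal_mul, ← hμ]
    have hsqre : ((μ : ℂ) ^ 2).re = μ ^ 2 := by
      rw [← Complex.ofReal_pow, Complex.ofReal_re]
    rw [h2re, hsqre] at this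
    nlinarith [this]
  -- expand ⟨O²⟩ as a double sum
  set x : Fin (d ^ 2) → Fin (d ^ 2) → ℝ :=
    fun i j => (Matrix.trace (ρ * (lam i * lam j))).re with hx
  have hE : (Matrix.trace (ρ * (O * O))).re = ∑ i ∈ A, ∑ j ∈ A, c i * c j * x i j := by
    have hOO : ρ * (O * O) =
        ∑ i ∈ A, ∑ j ∈ A, ((c i : ℂ) * (c j : ℂ)) • (ρ * (lam i * lam j)) := by
      rw [hO]
      simp only [Finset.mul_sum, Finset.sum_mul, Finset.smul_sum, smul_mul_assoc,
        mul_smul_comm, smul_smul]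
      rw [Finset.sum_comm]
      exact Finset.sum_congr rfl fun i _ => Finset.sum_congr rfl fun j _ => by rw [mul_comm]
    rw [hOO]
    simp only [Matrix.trace_sum, Matrix.trace_smul, smul_eq_mul, Complex.re_sum]
    refine Finset.sum_congr rfl fun i _ => Finset.sum_congr rfl fun j _ => ?_
    rw [← Complex.ofReal_mul, Complex.re_ofReal_mul, hx]
  -- split into diagonal and off-diagonal
  set D := ∑ i ∈ A, ∑ j ∈ A, (if i ≠ j then c i * c j * x i j else 0) with hD
  have hEsplit : (Matrix.trace (ρ * (O * O))).re = (∑ i ∈ A, c i ^ 2 * x i i) + D := by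
    rw [hE, hD, ← Finset.sum_add_distrib]
    refine Finset.sum_congr rfl fun i hi => ?_
    have hterm : ∀ j, c i * c j * x i j =
        (if i = j then c i * c j * x i j else 0) + (if i ≠ j then c i * c j * x i j else 0) := by
      intro j; by_cases h : i = j <;> simp [h]
    rw [Finset.sum_congr rfl fun j _ => hterm j, Finset.sum_add_distrib,
      Finset.sum_ite_eq, if_pos hi]
    ring_nf
  -- diagonal bound
  have hdiag : ∑ i ∈ A, c i ^ 2 * x i i ≤ S * Mx := by
    have : S * Mx = ∑ i ∈ A, c i ^ 2 * Mx := by rw [hS, Finset.sum_mul]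
    rw [this]
    refine Finset.sum_le_sum fun i hi => ?_
    have hxeq : x i i = (Matrix.trace (ρ * lam i ^ 2)).re := by rw [hx, pow_two (lam i)]
    rw [hxeq]
    exact mul_le_mul_of_nonneg_left
      (Finset.le_sup' (fun i => (Matrix.trace (ρ * lam i ^ 2)).re) hi) (sq_nonneg _)
  -- off-diagonal : symmetrization
  set a : Fin (d ^ 2) → Fin (d ^ 2) → ℝ :=
    fun i j => (Matrix.trace (ρ * (lam i * lam j + lam j * lam i))).re with ha
  have haxx : ∀ i j, a i j = x i j + x j i := by
    intro i j
    rw [ha, hx]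
    simp only [Matrix.mul_add, Matrix.trace_add, Complex.add_re]
  have hQa : Q = ∑ i ∈ A, ∑ j ∈ A, (if i ≠ j then (a i j) ^ 2 else 0) := by
    rw [hQ, ha]
  have hswap : D = ∑ i ∈ A, ∑ j ∈ A, (if i ≠ j then c i * c j * x j i else 0) := by
    rw [hD, Finset.sum_comm]
    refine Finset.sum_congr rfl fun i _ => Finset.sum_congr rfl fun j _ => ?_
    by_cases h : i = j
    · simp [h]
    · rw [if_pos (Ne.symm h), if_pos h]
      ring
  have hDD : 2 * D = ∑ i ∈ A, ∑ j ∈ A, (if i ≠ j then c i * c j * a i j else 0) := by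
    have : 2 * D = D + D := by ring
    rw [this]
    nth_rewrite 2 [hswap]
    rw [hD, ← Finset.sum_add_distrib]
    refine Finset.sum_congr rfl fun i _ => ?_
    rw [← Finset.sum_add_distrib]
    refine Finset.sum_congr rfl fun j _ => ?_
    by_cases h : i = j
    · simp [h]
    · rw [if_pos h, if_pos h, if_pos h, haxx]
      ring
  -- Cauchy-Schwarz
  have hcs : (2 * D) ^ 2 ≤ S ^ 2 * Q := by
    have h1 := Finset.sum_mul_sq_le_sq_mul_sq (A ×ˢ A)
      (fun p => if p.1 ≠ p.2 then c p.1 * c p.2 else 0)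
      (fun p => if p.1 ≠ p.2 then a p.1 p.2 else 0)
    have hfg : ∑ p ∈ A ×ˢ A,
        (if p.1 ≠ p.2 then c p.1 * c p.2 else 0) * (if p.1 ≠ p.2 then a p.1 p.2 else 0)
        = 2 * D := by
      rw [hDD, Finset.sum_product]
      refine Finset.sum_congr rfl fun i _ => Finset.sum_congr rfl fun j _ => ?_
      by_cases h : i = j <;> simp [h, mul_assoc]
    have hf2 : ∑ p ∈ A ×ˢ A, (if p.1 ≠ p.2 then c p.1 * c p.2 else 0) ^ 2 ≤ S ^ 2 := by
      have h2 : S ^ 2 = ∑ p ∈ A ×ˢ A, (c p.1 * c p.2) ^ 2 := by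
        rw [hS, sq, Finset.sum_mul_sum, Finset.sum_product]
        refine Finset.sum_congr rfl fun i _ => Finset.sum_congr rfl fun j _ => ?_
        ring
      rw [h2]
      refine Finset.sum_le_sum fun p _ => ?_
      by_cases h : p.1 = p.2 <;> simp [h, sq_nonneg]
    have hg2 : ∑ p ∈ A ×ˢ A, (if p.1 ≠ p.2 then a p.1 p.2 else 0) ^ 2 = Q := by
      rw [hQa, Finset.sum_product]
      refine Finset.sum_congr rfl fun i _ => Finset.sum_congr rfl fun j _ => ?_
      by_cases h : i = j <;> simp [h]
    rw [hfg, hg2] at h1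
    calc (2 * D) ^ 2 ≤ (∑ p ∈ A ×ˢ A, (if p.1 ≠ p.2 then c p.1 * c p.2 else 0) ^ 2) * Q := h1
      _ ≤ S ^ 2 * Q := mul_le_mul_of_nonneg_right hf2 hQ0
  have hDle : D ≤ S * K := by
    have h2 : 2 * D ≤ S * Real.sqrt Q := by
      calc 2 * D ≤ |2 * D| := le_abs_self _
        _ = Real.sqrt ((2 * D) ^ 2) := (Real.sqrt_sq_eq_abs _).symm
        _ ≤ Real.sqrt (S ^ 2 * Q) := Real.sqrt_le_sqrt hcs
        _ = S * Real.sqrt Q := by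
            rw [Real.sqrt_mul (sq_nonneg _), Real.sqrt_sq hS0]
    have h3 : S * (1 / 2 * Real.sqrt Q) ≤ S * K := mul_le_mul_of_nonneg_left hK hS0
    nlinarith [h2, h3]
  -- put everything together
  have hfinal : t ^ 2 * S ^ 2 ≤ S * (Mx + K) := by
    have h1 : (t * S) ^ 2 ≤ μ ^ 2 :=
      pow_le_pow_left₀ (mul_nonneg ht0.le hS0) hμge 2
    have h2 : (Matrix.trace (ρ * (O * O))).re ≤ S * Mx + S * K := by
      rw [hEsplit]
      exact add_le_add hdiag hDle
    calc t ^ 2 * S ^ 2 = (t * S) ^ 2 := by ring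
      _ ≤ μ ^ 2 := h1
      _ ≤ (Matrix.trace (ρ * (O * O))).re := hvar
      _ ≤ S * Mx + S * K := h2
      _ = S * (Mx + K) := by ring
  rcases eq_or_lt_of_le hS0 with h0 | hSpos
  · rw [← h0]
    exact div_nonneg (by linarith) (by positivity)
  · have ht2 : (0 : ℝ) < t ^ 2 := by positivity
    rw [le_div_iff₀ ht2]
    have hmul : (S * t ^ 2) * S ≤ (Mx + K) * S := by
      calc (S * t ^ 2) * S = t ^ 2 * S ^ 2 := by ring
        _ ≤ S * (Mx + K) := hfinal
        _ = (Mx + K) * S := by ring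
    exact le_of_mul_le_mul_right hmul hSpos
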